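/- For the Moran process with type selection probabilities p, if p_i satisfies 1/(N+1) < p_i < 1 − 1/(N+1) for all i=1,...,N−1, then the Moran transition matrix is banded stochastically ordered. -/

import Mathlib

open Finset

/-- Tail sum of a vector in `ℝ^{N+1}` from index `n`. -/
def tailSum (N : ℕ) (u : Fin (N+1) → ℝ) (n : ℕ) : ℝ :=
  ∑ i : Fin (N+1), if n ≤ (i : ℕ) then u i else 0

/-- A matrix is stochastically ordered: for `i > j`, row `i` stochastically dominates row `j`. -/
def IsStO (N : ℕ) (A : Matrix (Fin (N+1)) (Fin (N+1)) ℝ) : Prop :=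
  ∀ i j : Fin (N+1), j < i → ∀ n : ℕ, 1 ≤ n → n ≤ N →
    tailSum N (A j) n ≤ tailSum N (A i) n

/-- Banded stochastically ordered with band size one. -/
def IsBStO (N : ℕ) (A : Matrix (Fin (N+1)) (Fin (N+1)) ℝ) : Prop :=
  IsStO N A ∧
  ∀ i : ℕ, (h : i < N) → ∀ n : ℕ, i ≤ n → n ≤ i + 2 → 1 ≤ n → n ≤ N →
    tailSum N (A ⟨i, by omega⟩) n < tailSum N (A ⟨i + 1, by omega⟩) n

/-- The Moran transition matrix associated to a type selection probability vector `p`. -/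
noncomputable def moran (N : ℕ) (p : Fin (N+1) → ℝ) :
    Matrix (Fin (N+1)) (Fin (N+1)) ℝ :=
  fun i j =>
    if (j : ℕ) + 1 = (i : ℕ) then ((i : ℕ) : ℝ) / N * (1 - p i)
    else if (i : ℕ) + 1 = (j : ℕ) then ((N : ℝ) - ((i : ℕ) : ℝ)) / N * p i
    else if i = j then
      1 - ((i : ℕ) : ℝ) / N * (1 - p i) - ((N : ℝ) - ((i : ℕ) : ℝ)) / N * p i
    else 0

lemma tailSum_gt (N : ℕ) (u : Fin (N+1) → ℝ) (n : ℕ) (hn : N < n) : tailSum N u n = 0 := by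
  unfold tailSum
  apply Finset.sum_eq_zero
  intro j _
  rw [if_neg (by omega)]

lemma tailSum_succ (N : ℕ) (u : Fin (N+1) → ℝ) (n : ℕ) (hn : n ≤ N) :
    tailSum N u n = u ⟨n, by omega⟩ + tailSum N u (n+1) := by
  unfold tailSum
  have key : ∀ i : Fin (N+1), (if n ≤ (i:ℕ) then u i else 0) =
      (if i = ⟨n, by omega⟩ then u i else 0) + (if n+1 ≤ (i:ℕ) then u i else 0) := by
    intro i
    by_cases h1 : (i:ℕ) = n
    · rw [if_pos (by omega), if_pos (Fin.ext h1), if_neg (by omega)]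
      ring
    · rw [if_neg (fun h => h1 (Fin.ext_iff.mp h))]
      by_cases h2 : n ≤ (i:ℕ)
      · rw [if_pos h2, if_pos (by omega)]; ring
      · rw [if_neg h2, if_neg (by omega)]; ring
  rw [Finset.sum_congr rfl (fun i _ => key i), Finset.sum_add_distrib,
    Finset.sum_ite_eq' Finset.univ (⟨n, by omega⟩ : Fin (N+1)) u]
  simp


lemma moran_tail_hi (N : ℕ) (p : Fin (N+1) → ℝ) (i : Fin (N+1)) (n : ℕ)
    (hn : (i:ℕ) + 2 ≤ n) : tailSum N (moran N p i) n = 0 := by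
  unfold tailSum
  apply Finset.sum_eq_zero
  intro j _
  by_cases h : n ≤ (j:ℕ)
  · rw [if_pos h]
    unfold moran
    rw [if_neg (by omega), if_neg (by omega), if_neg (by rw [Fin.ext_iff]; omega)]
  · rw [if_neg h]

lemma moran_tail_succ (N : ℕ) (p : Fin (N+1) → ℝ) (i : Fin (N+1)) :
    tailSum N (moran N p i) ((i:ℕ)+1) = ((N:ℝ) - ((i:ℕ):ℝ))/N * p i := by
  by_cases hi : (i:ℕ) + 1 ≤ N
  · rw [tailSum_succ N _ _ hi, moran_tail_hi N p i _ (by omega)]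
    unfold moran
    rw [if_neg (by simp only [Fin.val_mk]; omega), if_pos (by simp)]
    ring
  · have hiN : (i:ℕ) = N := by omega
    rw [tailSum_gt N _ _ (by omega), hiN]
    simp

lemma moran_tail_self (N : ℕ) (p : Fin (N+1) → ℝ) (i : Fin (N+1)) :
    tailSum N (moran N p i) (i:ℕ) = 1 - ((i:ℕ):ℝ)/N * (1 - p i) := by
  rw [tailSum_succ N _ _ (by omega), moran_tail_succ N p i]
  have : moran N p i ⟨(i:ℕ), by omega⟩ =
      1 - ((i:ℕ):ℝ)/N * (1 - p i) - ((N:ℝ) - ((i:ℕ):ℝ))/N * p i := by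
    unfold moran
    rw [if_neg (by simp only [Fin.val_mk]; omega), if_neg (by simp only [Fin.val_mk]; omega),
      if_pos (by ext; simp)]
  rw [this]
  ring

lemma moran_tail_lo (N : ℕ) (p : Fin (N+1) → ℝ) (i : Fin (N+1)) (n : ℕ)
    (hn : n + 1 ≤ (i:ℕ)) : tailSum N (moran N p i) n = 1 := by
  have key : ∀ k n, n + 1 + k = (i:ℕ) → tailSum N (moran N p i) n = 1 := by
    intro k
    induction k with
    | zero =>
      intro n hn
      rw [tailSum_succ N _ _ (by omega)]
      have h1 : n + 1 = (i:ℕ) := by omega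
      have ht := moran_tail_self N p i
      rw [← h1] at ht
      rw [ht]
      have : moran N p i ⟨n, by omega⟩ = ((i:ℕ):ℝ)/N * (1 - p i) := by
        unfold moran
        rw [if_pos (by simp only [Fin.val_mk]; omega)]
      rw [this]
      have h2 : ((n:ℝ) + 1) = ((i:ℕ):ℝ) := by exact_mod_cast h1
      push_cast
      rw [h2]
      ring
    | succ k ih =>
      intro n hn
      rw [tailSum_succ N _ _ (by omega)]
      have : moran N p i ⟨n, by omega⟩ = 0 := by
        unfold moran
        rw [if_neg (by simp only [Fin.val_mk]; omega), if_neg (by simp only [Fin.val_mk]; omega),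
          if_neg (by rw [Fin.ext_iff]; simp only [Fin.val_mk]; omega)]
      rw [this, ih (n+1) (by omega)]
      ring
  exact key ((i:ℕ) - n - 1) n (by omega)


theorem stmt8 (N : ℕ) (hN : 1 ≤ N) (p : Fin (N+1) → ℝ)
    (hp0 : p 0 = 0) (hpN : p (Fin.last N) = 1)
    (hp : ∀ i : Fin (N+1), 0 < (i : ℕ) → (i : ℕ) < N →
      1 / ((N : ℝ) + 1) < p i ∧ p i < 1 - 1 / ((N : ℝ) + 1)) :
    IsBStO N (moran N p) := by
  have hNR : (1:ℝ) ≤ (N:ℝ) := by exact_mod_cast hN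
  have hNpos : (0:ℝ) < (N:ℝ) := by linarith
  have hcpos : (0:ℝ) < 1/((N:ℝ)+1) := by positivity
  have hp01 : ∀ i : Fin (N+1), 0 ≤ p i ∧ p i ≤ 1 := by
    intro i
    by_cases h0 : (i:ℕ) = 0
    · have : i = 0 := by ext; simpa using h0
      rw [this, hp0]; norm_num
    · by_cases hn : (i:ℕ) = N
      · have : i = Fin.last N := by ext; simpa using hn
        rw [this, hpN]; norm_num
      · obtain ⟨h1, h2⟩ := hp i (by omega) (by omega)
        constructor <;> linarith
  -- nonnegativity of the sub/super diagonal entries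
  have dnn : ∀ i : Fin (N+1), 0 ≤ ((i:ℕ):ℝ)/N * (1 - p i) := by
    intro i
    have := (hp01 i).2
    have : (0:ℝ) ≤ 1 - p i := by linarith
    positivity
  have unn : ∀ i : Fin (N+1), 0 ≤ ((N:ℝ) - ((i:ℕ):ℝ))/N * p i := by
    intro i
    have h1 := (hp01 i).1
    have h2 : ((i:ℕ):ℝ) ≤ (N:ℝ) := by exact_mod_cast Nat.le_of_lt_succ i.isLt
    have h3 : (0:ℝ) ≤ (N:ℝ) - ((i:ℕ):ℝ) := by linarith
    positivity
  -- the banded condition: sum of super- and sub-diagonal across a band is < 1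
  have band : ∀ m : ℕ, (hm : m < N) →
      ((N:ℝ) - (m:ℝ))/N * p ⟨m, by omega⟩ + ((m:ℝ)+1)/N * (1 - p ⟨m+1, by omega⟩) < 1 := by
    intro m hm
    set a := p ⟨m, by omega⟩ with ha
    set b := p ⟨m+1, by omega⟩ with hb
    have hmR : (m:ℝ) + 1 ≤ (N:ℝ) := by exact_mod_cast hm
    have hc : (1/((N:ℝ)+1)) * ((N:ℝ)+1) = 1 := by field_simp
    rw [div_mul_eq_mul_div, div_mul_eq_mul_div, ← add_div, div_lt_one hNpos]
    have ha0 : 0 ≤ a := (hp01 _).1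
    have hb1 : b ≤ 1 := (hp01 _).2
    by_cases hm0 : m = 0
    · subst hm0
      have ha00 : a = 0 := by rw [ha, show (⟨0, by omega⟩ : Fin (N+1)) = 0 from rfl, hp0]
      rw [ha00]
      by_cases h1N : 1 = N
      · have hbb : b = 1 := by
          rw [hb, show (⟨0+1, by omega⟩ : Fin (N+1)) = Fin.last N from by ext; simp [← h1N], hpN]
        rw [hbb]; push_cast; nlinarith
      · obtain ⟨hb2, hb3⟩ := hp ⟨0+1, by omega⟩ (by simp) (by simp; omega)
        push_cast
        nlinarith
    · obtain ⟨ha1, ha2⟩ := hp ⟨m, by omega⟩ (by simp; omega) (by simp; omega)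
      rw [← ha] at ha1 ha2
      by_cases hmN : m + 1 = N
      · have hbb : b = 1 := by
          rw [hb, show (⟨m+1, by omega⟩ : Fin (N+1)) = Fin.last N from by ext; simp [hmN], hpN]
        have hmNR : (m:ℝ) + 1 = (N:ℝ) := by exact_mod_cast hmN
        rw [hbb]
        nlinarith
      · obtain ⟨hb2, hb3⟩ := hp ⟨m+1, by omega⟩ (by simp) (by simp; omega)
        rw [← hb] at hb2 hb3
        have hxm : (0:ℝ) < (N:ℝ) - m := by linarith
        have hm1 : (0:ℝ) < (m:ℝ) + 1 := by positivity
        nlinarith [mul_lt_mul_of_pos_left ha2 hxm,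
          mul_lt_mul_of_pos_left (show 1 - b < 1 - 1/((N:ℝ)+1) by linarith) hm1, hc]
  have strict : ∀ m : ℕ, (hm : m < N) → ∀ n : ℕ, m ≤ n → n ≤ m + 2 → 1 ≤ n → n ≤ N →
      tailSum N (moran N p ⟨m, by omega⟩) n < tailSum N (moran N p ⟨m+1, by omega⟩) n := by
    intro m hm n hn1 hn2 hn3 hn4
    rcases (by omega : n = m ∨ n = m + 1 ∨ n = m + 2) with h | h | h
    · subst h
      have hL := moran_tail_self N p ⟨n, by omega⟩
      simp only [Fin.val_mk] at hL
      have hR := moran_tail_lo N p ⟨n+1, by omega⟩ n (by simp)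
      rw [hL, hR]
      obtain ⟨ha1, ha2⟩ := hp ⟨n, by omega⟩ (by simp; omega) (by simp; omega)
      have h1 : 1 - p ⟨n, by omega⟩ > 0 := by
        have := hcpos; linarith
      have h2 : (0:ℝ) < (n:ℝ) := by
        have : (1:ℝ) ≤ (n:ℝ) := by exact_mod_cast hn3
        linarith
      have h3 : 0 < ((n:ℕ):ℝ)/N * (1 - p ⟨n, by omega⟩) := by positivity
      linarith
    · subst h
      have hL := moran_tail_succ N p ⟨m, by omega⟩
      simp only [Fin.val_mk] at hL
      have hR := moran_tail_self N p ⟨m+1, by omega⟩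
      simp only [Fin.val_mk] at hR
      rw [hL, hR]
      have hb := band m hm
      push_cast at hb ⊢
      linarith
    · subst h
      have hL := moran_tail_hi N p ⟨m, by omega⟩ (m+2) (by simp)
      have hR := moran_tail_succ N p ⟨m+1, by omega⟩
      simp only [Fin.val_mk] at hR
      rw [hL, hR]
      obtain ⟨hb1, hb2⟩ := hp ⟨m+1, by omega⟩ (by simp) (by simp; omega)
      have h1 : 0 < p ⟨m+1, by omega⟩ := by linarith
      have h2 : (0:ℝ) < (N:ℝ) - ((m:ℝ)+1) := by
        have : (m:ℝ) + 2 ≤ (N:ℝ) := by exact_mod_cast hn4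
        linarith
      have h3 : 0 < ((N:ℝ) - ((m:ℝ)+1))/N * p ⟨m+1, by omega⟩ := by positivity
      push_cast
      linarith
  have consec : ∀ m : ℕ, (hm : m < N) → ∀ n : ℕ, 1 ≤ n → n ≤ N →
      tailSum N (moran N p ⟨m, by omega⟩) n ≤ tailSum N (moran N p ⟨m+1, by omega⟩) n := by
    intro m hm n hn1 hn2
    by_cases h1 : n + 1 ≤ m
    · rw [moran_tail_lo N p ⟨m, by omega⟩ n (by simp; omega),
        moran_tail_lo N p ⟨m+1, by omega⟩ n (by simp; omega)]
    · by_cases h2 : m + 3 ≤ n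
      · rw [moran_tail_hi N p ⟨m, by omega⟩ n (by simp; omega),
          moran_tail_hi N p ⟨m+1, by omega⟩ n (by simp; omega)]
      · exact le_of_lt (strict m hm n (by omega) (by omega) hn1 hn2)
  have chain : ∀ k j : ℕ, (hjk : j + k ≤ N) → ∀ n : ℕ, 1 ≤ n → n ≤ N →
      tailSum N (moran N p ⟨j, by omega⟩) n ≤ tailSum N (moran N p ⟨j + k, by omega⟩) n := by
    intro k
    induction k with
    | zero => intro j hjk n _ _; exact le_refl _
    | succ k ih =>
      intro j hjk n hn1 hn2
      exact le_trans (ih j (by omega) n hn1 hn2) (consec (j+k) (by omega) n hn1 hn2)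
  constructor
  · intro i j hij n hn1 hn2
    have h := chain ((i:ℕ) - (j:ℕ)) (j:ℕ) (by omega) n hn1 hn2
    have hji : (j:ℕ) < (i:ℕ) := hij
    have e1 : (⟨(j:ℕ), by omega⟩ : Fin (N+1)) = j := by ext; simp
    have e2 : (⟨(j:ℕ) + ((i:ℕ) - (j:ℕ)), by omega⟩ : Fin (N+1)) = i := by
      ext; simp only [Fin.val_mk]; omega
    rwa [e1, e2] at h
  · intro i h n h1 h2 h3 h4
    exact strict i h n h1 h2 h3 h4
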